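/- Let A = [[4,3,0],[-3,4,0],[0,0,5]] and B = [[4,0,3],[0,5,0],[-3,0,4]] over ℚ. If w_1,...,w_n and w'_1,...,w'_n are sequences over {A,B} and (w'_n)⁻¹·...·(w'_1)⁻¹·w_1·...·w_n is the identity matrix, then w_j = w'_j for all j. -/

import Mathlib

open scoped Matrix

namespace AWaux

def gQ : Bool → Matrix (Fin 3) (Fin 3) ℚ
  | true => !![4, 3, 0; -3, 4, 0; 0, 0, 5]
  | false => !![4, 0, 3; 0, 5, 0; -3, 0, 4]

def gZ : Bool → Matrix (Fin 3) (Fin 3) ℤ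
  | true => !![4, 3, 0; -3, 4, 0; 0, 0, 5]
  | false => !![4, 0, 3; 0, 5, 0; -3, 0, 4]

def g5 : Bool → Matrix (Fin 3) (Fin 3) (ZMod 5)
  | true => !![4, 3, 0; 2, 4, 0; 0, 0, 0]
  | false => !![4, 0, 3; 0, 0, 0; 2, 0, 4]

def cc : Bool → (Fin 3 → ZMod 5)
  | true => ![4, 2, 0]
  | false => ![4, 0, 2]

lemma castQ (b : Bool) : (gZ b).map (Int.cast : ℤ → ℚ) = gQ b := by
  cases b <;> ext i j <;> fin_cases i <;> fin_cases j <;>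
    simp [gZ, gQ, Matrix.map_apply]

lemma cast5 (b : Bool) : (gZ b).map (Int.cast : ℤ → ZMod 5) = g5 b := by
  cases b <;> ext i j <;> fin_cases i <;> fin_cases j <;>
    simp [gZ, g5, Matrix.map_apply] <;> decide

lemma step (b b' : Bool) : ∃ μ : ZMod 5, μ ≠ 0 ∧ g5 b *ᵥ cc b' = μ • cc b := by
  cases b <;> cases b' <;> decide

lemma distinguish (b b' : Bool) (lam mu : ZMod 5) (hl : lam ≠ 0) (hm : mu ≠ 0)
    (h : lam • cc b = mu • cc b') : b = b' := by
  revert h; revert hl hm; revert lam mu; cases b <;> cases b' <;> decide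

lemma base (b : Bool) : g5 b *ᵥ ![1, 0, 0] = cc b := by
  cases b <;> decide

lemma key : ∀ (l : List Bool) (b : Bool), ∃ lam : ZMod 5, lam ≠ 0 ∧
    ((b :: l).map g5).prod *ᵥ ![1, 0, 0] = lam • cc b := by
  intro l
  induction l with
  | nil => intro b; exact ⟨1, by decide, by simp [base]⟩
  | cons b' t ih =>
    intro b
    obtain ⟨lam, hlam, hl⟩ := ih b'
    obtain ⟨mu, hmu, hst⟩ := step b b'
    haveI : Fact (Nat.Prime 5) := ⟨by norm_num⟩
    refine ⟨mu * lam, mul_ne_zero hmu hlam, ?_⟩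
    have : ((b :: b' :: t).map g5).prod = g5 b * ((b' :: t).map g5).prod := by
      simp [List.prod_cons]
    rw [this, ← Matrix.mulVec_mulVec, hl, Matrix.mulVec_smul, hst,
      smul_smul, mul_comm lam mu]

lemma prodZQ (l : List Bool) :
    ((l.map gZ).prod).map (Int.cast : ℤ → ℚ) = (l.map gQ).prod := by
  have := map_list_prod ((Int.castRingHom ℚ).mapMatrix) (l.map gZ)
  simp only [RingHom.mapMatrix_apply, Int.coe_castRingHom] at this
  rw [this, List.map_map]
  refine congrArg List.prod (List.map_congr_left fun b _ => ?_)
  simpa [RingHom.mapMatrix_apply] using castQ b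

lemma prodZ5 (l : List Bool) :
    ((l.map gZ).prod).map (Int.cast : ℤ → ZMod 5) = (l.map g5).prod := by
  have := map_list_prod ((Int.castRingHom (ZMod 5)).mapMatrix) (l.map gZ)
  simp only [RingHom.mapMatrix_apply, Int.coe_castRingHom] at this
  rw [this, List.map_map]
  refine congrArg List.prod (List.map_congr_left fun b _ => ?_)
  simpa [RingHom.mapMatrix_apply] using cast5 b

lemma isUnit_gQ (b : Bool) : IsUnit (gQ b) := by
  rw [Matrix.isUnit_iff_isUnit_det]
  cases b <;> simp [gQ, Matrix.det_fin_three] <;> norm_num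

lemma firstEq (b b' : Bool) (t t' : List Bool)
    (h : ((b :: t).map gQ).prod = ((b' :: t').map gQ).prod) : b = b' := by
  -- transfer to ℤ
  have hZ : ((b :: t).map gZ).prod = ((b' :: t').map gZ).prod := by
    have inj : Function.Injective fun M : Matrix (Fin 3) (Fin 3) ℤ =>
        M.map (Int.cast : ℤ → ℚ) := by
      intro M N hMN
      ext i j
      have := congr_fun (congr_fun hMN i) j
      simp only [Matrix.map_apply] at this
      exact_mod_cast this
    have hq := h
    rw [← prodZQ, ← prodZQ] at hq
    exact inj hq
  have h5 : ((b :: t).map g5).prod = ((b' :: t').map g5).prod := by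
    rw [← prodZ5, ← prodZ5, hZ]
  obtain ⟨lam, hlam, hl⟩ := key t b
  obtain ⟨mu, hmu, hl'⟩ := key t' b'
  exact distinguish b b' lam mu hlam hmu (by rw [← hl, ← hl', h5])

lemma words_eq : ∀ l l' : List Bool, l.length = l'.length →
    (l.map gQ).prod = (l'.map gQ).prod → l = l' := by
  intro l
  induction l with
  | nil =>
    intro l' hlen _
    exact (List.length_eq_zero_iff.mp hlen.symm).symm
  | cons b t ih =>
    intro l' hlen hprod
    cases l' with
    | nil => simp at hlen
    | cons b' t' =>
      have hb : b = b' := firstEq b b' t t' hprod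
      subst hb
      simp only [List.map_cons, List.prod_cons] at hprod
      have ht : (t.map gQ).prod = (t'.map gQ).prod :=
        ((isUnit_gQ b).mul_right_inj).mp hprod
      have := ih t' (by simpa using hlen) ht
      rw [this]

lemma prod_inv (l : List (Matrix (Fin 3) (Fin 3) ℚ)) (hu : ∀ x ∈ l, IsUnit x) :
    l.prod * (l.map Inv.inv).reverse.prod = 1 := by
  induction l with
  | nil => simp
  | cons a t ih =>
    have ha : IsUnit a := hu a (by simp)
    have ht := ih (fun x hx => hu x (by simp [hx]))
    have haa : a * a⁻¹ = 1 :=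
      Matrix.mul_nonsing_inv a ((Matrix.isUnit_iff_isUnit_det a).mp ha)
    simp only [List.map_cons, List.reverse_cons, List.prod_append,
      List.prod_cons, List.prod_nil, mul_one]
    calc a * t.prod * ((t.map Inv.inv).reverse.prod * a⁻¹)
        = a * (t.prod * (t.map Inv.inv).reverse.prod) * a⁻¹ := by
          simp only [mul_assoc]
      _ = a * a⁻¹ := by rw [ht, mul_one]
      _ = 1 := haa

end AWaux


theorem AW_freeness_on_positive_words
    (n : ℕ) (w w' : Fin n → Matrix (Fin 3) (Fin 3) ℚ)
    (A : Matrix (Fin 3) (Fin 3) ℚ) (B : Matrix (Fin 3) (Fin 3) ℚ)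
    (hA : A = !![4, 3, 0; -3, 4, 0; 0, 0, 5])
    (hB : B = !![4, 0, 3; 0, 5, 0; -3, 0, 4])
    (hw : ∀ j, w j = A ∨ w j = B) (hw' : ∀ j, w' j = A ∨ w' j = B)
    (h : (List.ofFn fun j => (w' j)⁻¹).reverse.prod *
          (List.ofFn fun j => w j).prod = 1) :
    ∀ j, w j = w' j := by
  subst hA hB
  have hc : ∀ j, ∃ c : Bool, w j = AWaux.gQ c := fun j =>
    (hw j).elim (fun hj => ⟨true, hj⟩) (fun hj => ⟨false, hj⟩)
  have hc' : ∀ j, ∃ c : Bool, w' j = AWaux.gQ c := fun j =>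
    (hw' j).elim (fun hj => ⟨true, hj⟩) (fun hj => ⟨false, hj⟩)
  choose b hb using hc
  choose b' hb' using hc'
  have hrev : (List.ofFn fun j => (w' j)⁻¹) = (List.ofFn w').map Inv.inv := by
    rw [List.map_ofFn]; rfl
  have hunit : ∀ x ∈ List.ofFn w', IsUnit x := by
    intro x hx
    obtain ⟨j, rfl⟩ := List.mem_ofFn.mp hx
    rw [hb' j]; exact AWaux.isUnit_gQ (b' j)
  have hPI := AWaux.prod_inv (List.ofFn w') hunit
  rw [hrev] at h
  have hprod : (List.ofFn w).prod = (List.ofFn w').prod := by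
    calc (List.ofFn w).prod = 1 * (List.ofFn w).prod := (one_mul _).symm
      _ = (List.ofFn w').prod *
          (((List.ofFn w').map Inv.inv).reverse.prod * (List.ofFn w).prod) := by
            rw [← hPI, mul_assoc]
      _ = (List.ofFn w').prod := by rw [h, mul_one]
  have hLw : List.ofFn w = (List.ofFn b).map AWaux.gQ := by
    rw [List.map_ofFn]; exact congrArg List.ofFn (funext hb)
  have hLw' : List.ofFn w' = (List.ofFn b').map AWaux.gQ := by
    rw [List.map_ofFn]; exact congrArg List.ofFn (funext hb')
  rw [hLw, hLw'] at hprod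
  have hbb : List.ofFn b = List.ofFn b' :=
    AWaux.words_eq _ _ (by simp) hprod
  have hbb' : b = b' := List.ofFn_injective hbb
  intro j
  rw [hb j, hb' j, hbb']
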